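/- If a vertex property over Π is defined by some Mean-GNN all of whose combination functions are continuous and is also defined by some ML formula, then it is defined by an AFML formula. -/

import Mathlib

open scoped Classical

/-- A `α`-labeled finite directed graph. -/
structure LabeledGraph (α : Type) : Type 1 where
  V : Type
  [fintypeV : Fintype V]
  adj : V → V → Prop
  label : V → α → Prop

attribute [instance] LabeledGraph.fintypeV

namespace LabeledGraph

variable {α : Type}

/-- The neighborhood (set of successors) of a vertex. -/
def nbhd (G : LabeledGraph α) (v : G.V) : Set G.V := {u | G.adj v u}

/-- The neighborhood of a vertex, as a finset. -/
noncomputable def nbhdFinset (G : LabeledGraph α) (v : G.V) : Finset G.V :=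
  Finset.univ.filter (fun u => G.adj v u)

/-- The `c`-scaling of a graph: each vertex is multiplied `c` times. -/
def scale (G : LabeledGraph α) (c : ℕ) : LabeledGraph α where
  V := G.V × Fin c
  adj := fun p q => G.adj p.1 q.1
  label := fun p => G.label p.1

end LabeledGraph

/-- Formulas of modal logic ML. -/
inductive ML (α : Type) : Type where
  | atom : α → ML α
  | neg  : ML α → ML α
  | or   : ML α → ML α → ML α
  | dia  : ML α → ML α

/-- Satisfaction for ML. -/
def ML.sat {α : Type} (G : LabeledGraph α) : ML α → G.V → Prop
  | .atom p, v => G.label v p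
  | .neg φ, v => ¬ ML.sat G φ v
  | .or φ ψ, v => ML.sat G φ v ∨ ML.sat G ψ v
  | .dia φ, v => ∃ u, G.adj v u ∧ ML.sat G φ u

/-- Formulas of graded modal logic GML. -/
inductive GML (α : Type) : Type where
  | atom : α → GML α
  | neg  : GML α → GML α
  | or   : GML α → GML α → GML α
  | dia  : ℕ → GML α → GML α

/-- Satisfaction for GML: `dia n φ` is `◊^{≥n} φ`. -/
def GML.sat {α : Type} (G : LabeledGraph α) : GML α → G.V → Prop
  | .atom p, v => G.label v p
  | .neg φ, v => ¬ GML.sat G φ v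
  | .or φ ψ, v => GML.sat G φ v ∨ GML.sat G ψ v
  | .dia n φ, v => n ≤ {u | G.adj v u ∧ GML.sat G φ u}.ncard

/-- Formulas of ratio modal logic RML; diamonds carry a ratio `r ∈ [0,1]`. -/
inductive RML (α : Type) : Type where
  | atom  : α → RML α
  | neg   : RML α → RML α
  | or    : RML α → RML α → RML α
  | diaGe : Set.Icc (0:ℝ) 1 → RML α → RML α
  | diaGt : Set.Icc (0:ℝ) 1 → RML α → RML α

/-- Satisfaction for RML. If a vertex has no successors then `◊^{≥r}φ`
holds and `◊^{>r}φ` fails; otherwise the fraction of successors satisfying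
`φ` is compared with `r`. -/
noncomputable def RML.sat {α : Type} (G : LabeledGraph α) : RML α → G.V → Prop
  | .atom p, v => G.label v p
  | .neg φ, v => ¬ RML.sat G φ v
  | .or φ ψ, v => RML.sat G φ v ∨ RML.sat G ψ v
  | .diaGe r φ, v => (G.nbhd v).Nonempty →
      (r : ℝ) ≤ ({u | G.adj v u ∧ RML.sat G φ u}.ncard : ℝ) / ((G.nbhd v).ncard : ℝ)
  | .diaGt r φ, v => (G.nbhd v).Nonempty ∧
      (r : ℝ) < ({u | G.adj v u ∧ RML.sat G φ u}.ncard : ℝ) / ((G.nbhd v).ncard : ℝ)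

/-- Formulas of AFML[1] (diamond fragment of alternation-free modal logic). -/
inductive AFML1 (α : Type) : Type where
  | atom   : α → AFML1 α
  | natom  : α → AFML1 α
  | boxBot : AFML1 α
  | and    : AFML1 α → AFML1 α → AFML1 α
  | or     : AFML1 α → AFML1 α → AFML1 α
  | dia    : AFML1 α → AFML1 α

/-- Satisfaction for AFML[1]. -/
def AFML1.sat {α : Type} (G : LabeledGraph α) : AFML1 α → G.V → Prop
  | .atom p, v => G.label v p
  | .natom p, v => ¬ G.label v p
  | .boxBot, v => ∀ u, ¬ G.adj v u
  | .and φ ψ, v => AFML1.sat G φ v ∧ AFML1.sat G ψ v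
  | .or φ ψ, v => AFML1.sat G φ v ∨ AFML1.sat G ψ v
  | .dia φ, v => ∃ u, G.adj v u ∧ AFML1.sat G φ u

/-- Modal depth of an AFML[1] formula. -/
def AFML1.depth {α : Type} : AFML1 α → ℕ
  | .atom _ => 0
  | .natom _ => 0
  | .boxBot => 1
  | .and φ ψ => max (AFML1.depth φ) (AFML1.depth ψ)
  | .or φ ψ => max (AFML1.depth φ) (AFML1.depth ψ)
  | .dia φ => AFML1.depth φ + 1

/-- Formulas of AFML[2] (box fragment of alternation-free modal logic). -/
inductive AFML2 (α : Type) : Type where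
  | atom   : α → AFML2 α
  | natom  : α → AFML2 α
  | diaTop : AFML2 α
  | and    : AFML2 α → AFML2 α → AFML2 α
  | or     : AFML2 α → AFML2 α → AFML2 α
  | box    : AFML2 α → AFML2 α

/-- Satisfaction for AFML[2]. -/
def AFML2.sat {α : Type} (G : LabeledGraph α) : AFML2 α → G.V → Prop
  | .atom p, v => G.label v p
  | .natom p, v => ¬ G.label v p
  | .diaTop, v => ∃ u, G.adj v u
  | .and φ ψ, v => AFML2.sat G φ v ∧ AFML2.sat G ψ v
  | .or φ ψ, v => AFML2.sat G φ v ∨ AFML2.sat G ψ v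
  | .box φ, v => ∀ u, G.adj v u → AFML2.sat G φ u

/-- Alternation-free modal logic: AFML[1] formulas together with AFML[2] formulas. -/
def AFML (α : Type) : Type := AFML1 α ⊕ AFML2 α

/-- Satisfaction for AFML. -/
def AFML.sat {α : Type} (G : LabeledGraph α) : AFML α → G.V → Prop
  | .inl φ => AFML1.sat G φ
  | .inr φ => AFML2.sat G φ

/-- The three aggregation functions. -/
inductive Agg : Type where
  | sum : Agg
  | mean : Agg
  | max : Agg

/-- Apply an aggregation function componentwise to the (multiset of) values of `x`
over the finset `s`; empty aggregation yields `0` (so mean of the empty multiset is `0`). -/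
noncomputable def Agg.apply {V : Type} : Agg → Finset V → (V → ℝ) → ℝ
  | .sum, s, x => ∑ u ∈ s, x u
  | .mean, s, x => (∑ u ∈ s, x u) / (s.card : ℝ)
  | .max, s, x => if h : s.Nonempty then s.sup' h x else 0

/-- A GNN: `L` layers, dimensions `δ 0, …, δ L` with `δ 0 = |α|`,
combination functions `com ℓ : ℝ^{δ ℓ} × ℝ^{δ ℓ} → ℝ^{δ (ℓ+1)}` for `ℓ < L`,
and a threshold classification function `CLS(x) = 1 iff x_clsIdx ∼ clsThr`
where `∼` is `>` if `clsStrict` and `≥` otherwise. -/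
structure GNN (α : Type) [Fintype α] : Type where
  L : ℕ
  δ : ℕ → ℕ
  hδ0 : δ 0 = Fintype.card α
  com : (ℓ : ℕ) → (Fin (δ ℓ) → ℝ) → (Fin (δ ℓ) → ℝ) → (Fin (δ (ℓ+1)) → ℝ)
  clsIdx : Fin (δ L)
  clsStrict : Bool
  clsThr : ℝ

/-- The feature vector computed by a GNN (with aggregation `agg`) at layer `ℓ`
at vertex `v` of graph `G`. Layer 0 yields the 0/1 indicator vector of the labels. -/
noncomputable def GNN.feat {α : Type} [Fintype α] (𝒢 : GNN α) (agg : Agg)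
    (G : LabeledGraph α) : (ℓ : ℕ) → G.V → Fin (𝒢.δ ℓ) → ℝ
  | 0, v, i => if G.label v ((Fintype.equivFin α).symm (Fin.cast 𝒢.hδ0 i)) then 1 else 0
  | (ℓ+1), v, i =>
      𝒢.com ℓ (𝒢.feat agg G ℓ v)
        (fun j => agg.apply (G.nbhdFinset v) (fun u => 𝒢.feat agg G ℓ u j)) i

/-- The GNN accepts a pointed graph iff the classification function outputs 1 on
the final feature vector. -/
noncomputable def GNN.accepts {α : Type} [Fintype α] (𝒢 : GNN α) (agg : Agg)
    (G : LabeledGraph α) (v : G.V) : Prop :=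
  if 𝒢.clsStrict then 𝒢.clsThr < 𝒢.feat agg G 𝒢.L v 𝒢.clsIdx
  else 𝒢.clsThr ≤ 𝒢.feat agg G 𝒢.L v 𝒢.clsIdx

/-- A GNN is simple with activation function `f` if each combination function
has the form `COM(x_v, x_a) = f(x_v·C + x_a·A + b)` (componentwise `f`). -/
def GNN.IsSimple {α : Type} [Fintype α] (𝒢 : GNN α) (f : ℝ → ℝ) : Prop :=
  ∀ ℓ < 𝒢.L, ∃ (C A : Fin (𝒢.δ ℓ) → Fin (𝒢.δ (ℓ+1)) → ℝ) (b : Fin (𝒢.δ (ℓ+1)) → ℝ),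
    ∀ (xv xa : Fin (𝒢.δ ℓ) → ℝ) (i : Fin (𝒢.δ (ℓ+1))),
      𝒢.com ℓ xv xa i = f ((∑ j, xv j * C j i) + (∑ j, xa j * A j i) + b i)

/-- All combination functions of the GNN are continuous. -/
def GNN.HasContinuousCom {α : Type} [Fintype α] (𝒢 : GNN α) : Prop :=
  ∀ ℓ < 𝒢.L,
    Continuous (fun p : (Fin (𝒢.δ ℓ) → ℝ) × (Fin (𝒢.δ ℓ) → ℝ) => 𝒢.com ℓ p.1 p.2)

/-- Truncated ReLU. -/
noncomputable def reluStar : ℝ → ℝ := fun x => min (max 0 x) 1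

/-- ReLU. -/
noncomputable def relu : ℝ → ℝ := fun x => max 0 x

/-- Two pointed graphs have the same vertex labels at their distinguished vertices. -/
def labelsEq {α : Type} (G1 G2 : LabeledGraph α) (v1 : G1.V) (v2 : G2.V) : Prop :=
  ∀ p, G1.label v1 p ↔ G2.label v2 p

/-- Spoiler wins the `ℓ`-round ML game on `((G1,v1),(G2,v2))`. -/
def spoilerWinsML {α : Type} (G1 G2 : LabeledGraph α) : ℕ → G1.V → G2.V → Prop
  | 0, v1, v2 => ¬ labelsEq G1 G2 v1 v2
  | (ℓ+1), v1, v2 =>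
      ¬ labelsEq G1 G2 v1 v2
      ∨ (∃ u1, G1.adj v1 u1 ∧ ∀ u2, G2.adj v2 u2 → spoilerWinsML G1 G2 ℓ u1 u2)
      ∨ (∃ u2, G2.adj v2 u2 ∧ ∀ u1, G1.adj v1 u1 → spoilerWinsML G1 G2 ℓ u1 u2)

/-- Spoiler wins the `ℓ`-round AFML[1] game on `((G1,v1),(G2,v2))`. -/
def spoilerWinsAFML1 {α : Type} (G1 G2 : LabeledGraph α) : ℕ → G1.V → G2.V → Prop
  | 0, v1, v2 => ¬ labelsEq G1 G2 v1 v2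
  | (ℓ+1), v1, v2 =>
      ¬ labelsEq G1 G2 v1 v2
      ∨ ((∀ u, ¬ G1.adj v1 u) ∧ (∃ u, G2.adj v2 u))
      ∨ (∃ u1, G1.adj v1 u1 ∧ ∀ u2, G2.adj v2 u2 → spoilerWinsAFML1 G1 G2 ℓ u1 u2)

/-- Spoiler wins the `ℓ`-round GML game with counting bound `c` on `((G1,v1),(G2,v2))`. -/
def spoilerWinsGML {α : Type} (c : ℕ) (G1 G2 : LabeledGraph α) : ℕ → G1.V → G2.V → Prop
  | 0, v1, v2 => ¬ labelsEq G1 G2 v1 v2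
  | (ℓ+1), v1, v2 =>
      ¬ labelsEq G1 G2 v1 v2
      ∨ (∃ U1 : Finset G1.V, (∀ u ∈ U1, G1.adj v1 u) ∧ 0 < U1.card ∧ U1.card ≤ c ∧
          ((G2.nbhd v2).ncard < U1.card ∨
            ∀ U2 : Finset G2.V, (∀ u ∈ U2, G2.adj v2 u) → U2.card = U1.card →
              ∃ u2 ∈ U2, ∀ u1 ∈ U1, spoilerWinsGML c G1 G2 ℓ u1 u2))
      ∨ (∃ U2 : Finset G2.V, (∀ u ∈ U2, G2.adj v2 u) ∧ 0 < U2.card ∧ U2.card ≤ c ∧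
          ((G1.nbhd v1).ncard < U2.card ∨
            ∀ U1 : Finset G1.V, (∀ u ∈ U1, G1.adj v1 u) → U1.card = U2.card →
              ∃ u1 ∈ U1, ∀ u2 ∈ U2, spoilerWinsGML c G1 G2 ℓ u1 u2))

/-- The ratio `1/2` as an element of `[0,1]`. -/
noncomputable def half : Set.Icc (0:ℝ) 1 := ⟨1/2, by norm_num⟩

namespace S16
variable {α : Type} [Fintype α]

def Ty (α : Type) [Fintype α] : ℕ → Type :=
  fun j => Nat.rec (Finset α) (fun _ T => Finset α × Finset T) j

noncomputable instance tyFintype : ∀ j : ℕ, Fintype (Ty α j)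
  | 0 => (inferInstance : Fintype (Finset α))
  | (j+1) => letI : Fintype (Ty α j) := tyFintype j
             (inferInstance : Fintype (Finset α × Finset (Ty α j)))

noncomputable instance tyDEq (j : ℕ) : DecidableEq (Ty α j) := Classical.decEq _

noncomputable def labelF (G : LabeledGraph α) (v : G.V) : Finset α :=
  Finset.univ.filter (fun p => G.label v p)

lemma mem_labelF {G : LabeledGraph α} {v : G.V} {p : α} : p ∈ labelF G v ↔ G.label v p := by
  simp [labelF]

lemma mem_nbhdFinset {G : LabeledGraph α} {v u : G.V} :
    u ∈ G.nbhdFinset v ↔ G.adj v u := by simp [LabeledGraph.nbhdFinset]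

noncomputable def ty : (j : ℕ) → (G : LabeledGraph α) → G.V → Ty α j
  | 0, G, v => labelF G v
  | (j+1), G, v => (labelF G v, (G.nbhdFinset v).image (fun u => ty j G u))

def tyLe : (j : ℕ) → Ty α j → Ty α j → Prop
  | 0, s, t => s = t
  | (j+1), p, q => p.1 = q.1 ∧ (p.2 = ∅ → q.2 = ∅) ∧ ∀ x ∈ p.2, ∃ y ∈ q.2, tyLe j x y

lemma tyLe_refl : ∀ (j : ℕ) (t : Ty α j), tyLe j t t
  | 0, t => rfl
  | (j+1), t => ⟨rfl, id, fun x hx => ⟨x, hx, tyLe_refl j x⟩⟩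

end S16

namespace S16
variable {α : Type} [Fintype α]

def mlDepth {α : Type} : ML α → ℕ
  | .atom _ => 0
  | .neg φ => mlDepth φ
  | .or φ ψ => max (mlDepth φ) (mlDepth ψ)
  | .dia φ => mlDepth φ + 1

def mlAtom {α : Type} : ML α → α
  | .atom p => p
  | .neg φ => mlAtom φ
  | .or φ _ => mlAtom φ
  | .dia φ => mlAtom φ

lemma labelF_eq_of_ty_eq : ∀ {j : ℕ} {G1 G2 : LabeledGraph α} {v1 : G1.V} {v2 : G2.V},
    ty j G1 v1 = ty j G2 v2 → labelF G1 v1 = labelF G2 v2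
  | 0, _, _, _, _, h => h
  | (_+1), _, _, _, _, h => congrArg Prod.fst h

lemma labelF_eq_of_tyLe : ∀ {j : ℕ} {G1 G2 : LabeledGraph α} {v1 : G1.V} {v2 : G2.V},
    tyLe j (ty j G1 v1) (ty j G2 v2) → labelF G1 v1 = labelF G2 v2
  | 0, _, _, _, _, h => h
  | (_+1), _, _, _, _, h => h.1

lemma label_iff_of_labelF_eq {G1 G2 : LabeledGraph α} {v1 : G1.V} {v2 : G2.V}
    (h : labelF G1 v1 = labelF G2 v2) (p : α) : G1.label v1 p ↔ G2.label v2 p := by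
  rw [← mem_labelF, ← mem_labelF, h]

lemma ml_inv (G1 G2 : LabeledGraph α) (φ : ML α) :
    ∀ (j : ℕ), mlDepth φ ≤ j → ∀ (v1 : G1.V) (v2 : G2.V),
    ty j G1 v1 = ty j G2 v2 → (ML.sat G1 φ v1 ↔ ML.sat G2 φ v2) := by
  induction φ with
  | atom p =>
    intro j _ v1 v2 hty
    exact label_iff_of_labelF_eq (labelF_eq_of_ty_eq hty) p
  | neg φ ih =>
    intro j hd v1 v2 hty
    exact not_congr (ih j hd v1 v2 hty)
  | or φ1 φ2 ih1 ih2 =>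
    intro j hd v1 v2 hty
    simp only [mlDepth, max_le_iff] at hd
    exact or_congr (ih1 j hd.1 v1 v2 hty) (ih2 j hd.2 v1 v2 hty)
  | dia φ ih =>
    intro j hd v1 v2 hty
    obtain ⟨m, rfl⟩ : ∃ m, j = m + 1 := ⟨j - 1, by simp [mlDepth] at hd; omega⟩
    have hsnd := congrArg Prod.snd hty
    simp only [ty] at hsnd
    constructor
    · rintro ⟨u1, hadj, hs⟩
      have h1 : ty m G1 u1 ∈ (G1.nbhdFinset v1).image (fun u => ty m G1 u) :=
        Finset.mem_image_of_mem _ (mem_nbhdFinset.mpr hadj)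
      rw [show (G1.nbhdFinset v1).image (fun u => ty m G1 u) = (G2.nbhdFinset v2).image (fun u => ty m G2 u) from hsnd] at h1
      obtain ⟨u2, hu2, heq⟩ := Finset.mem_image.mp h1
      exact ⟨u2, mem_nbhdFinset.mp hu2,
        (ih m (by simp [mlDepth] at hd; omega) u1 u2 heq.symm).mp hs⟩
    · rintro ⟨u2, hadj, hs⟩
      have h1 : ty m G2 u2 ∈ (G2.nbhdFinset v2).image (fun u => ty m G2 u) :=
        Finset.mem_image_of_mem _ (mem_nbhdFinset.mpr hadj)
      rw [← show (G1.nbhdFinset v1).image (fun u => ty m G1 u) = (G2.nbhdFinset v2).image (fun u => ty m G2 u) from hsnd] at h1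
      obtain ⟨u1, hu1, heq⟩ := Finset.mem_image.mp h1
      exact ⟨u1, mem_nbhdFinset.mp hu1,
        (ih m (by simp [mlDepth] at hd; omega) u1 u2 heq).mpr hs⟩

section Formulas
variable (p0 : α)

def top1 : AFML1 α := .or (.atom p0) (.natom p0)
def bot1 : AFML1 α := .and (.atom p0) (.natom p0)

lemma sat_top1 (G : LabeledGraph α) (v : G.V) : AFML1.sat G (top1 p0) v := by
  by_cases h : G.label v p0
  · exact Or.inl h
  · exact Or.inr h

lemma sat_bot1 (G : LabeledGraph α) (v : G.V) : ¬ AFML1.sat G (bot1 p0) v := by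
  rintro ⟨h1, h2⟩; exact h2 h1

def bigAnd : List (AFML1 α) → AFML1 α
  | [] => top1 p0
  | (φ :: l) => .and φ (bigAnd l)

lemma sat_bigAnd (G : LabeledGraph α) (v : G.V) :
    ∀ l : List (AFML1 α), AFML1.sat G (bigAnd p0 l) v ↔ ∀ φ ∈ l, AFML1.sat G φ v
  | [] => by simpa [bigAnd] using sat_top1 p0 G v
  | (φ :: l) => by
    simp only [bigAnd, List.mem_cons]
    rw [show AFML1.sat G (.and φ (bigAnd p0 l)) v ↔ _ ∧ _ from Iff.rfl, sat_bigAnd G v l]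
    constructor
    · rintro ⟨h1, h2⟩ ψ (rfl | hψ); exacts [h1, h2 ψ hψ]
    · intro hh; exact ⟨hh φ (Or.inl rfl), fun ψ hψ => hh ψ (Or.inr hψ)⟩

def bigOr : List (AFML1 α) → AFML1 α
  | [] => bot1 p0
  | (φ :: l) => .or φ (bigOr l)

lemma sat_bigOr (G : LabeledGraph α) (v : G.V) :
    ∀ l : List (AFML1 α), AFML1.sat G (bigOr p0 l) v ↔ ∃ φ ∈ l, AFML1.sat G φ v
  | [] => by simpa [bigOr] using sat_bot1 p0 G v
  | (φ :: l) => by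
    simp only [bigOr, List.mem_cons]
    rw [show AFML1.sat G (.or φ (bigOr p0 l)) v ↔ _ ∨ _ from Iff.rfl, sat_bigOr G v l]
    constructor
    · rintro (h1 | ⟨ψ, h1, h2⟩); exacts [⟨φ, Or.inl rfl, h1⟩, ⟨ψ, Or.inr h1, h2⟩]
    · rintro ⟨ψ, (rfl | hψ), h2⟩; exacts [Or.inl h2, Or.inr ⟨ψ, hψ, h2⟩]

noncomputable def labelConj (s : Finset α) : AFML1 α :=
  bigAnd p0 ((Finset.univ.toList).map (fun p => if p ∈ s then AFML1.atom p else AFML1.natom p))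

lemma sat_labelConj (s : Finset α) (G : LabeledGraph α) (v : G.V) :
    AFML1.sat G (labelConj p0 s) v ↔ labelF G v = s := by
  rw [labelConj, sat_bigAnd]
  constructor
  · intro hh
    ext p
    have hp := hh _ (List.mem_map.mpr ⟨p, Finset.mem_toList.mpr (Finset.mem_univ p), rfl⟩)
    by_cases hps : p ∈ s
    · rw [if_pos hps] at hp
      simp only [hps, iff_true, mem_labelF]
      exact hp
    · rw [if_neg hps] at hp
      simp only [hps, iff_false, mem_labelF]
      exact hp
  · rintro rfl φ hφ
    obtain ⟨p, _, rfl⟩ := List.mem_map.mp hφ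
    by_cases hps : p ∈ labelF G v
    · rw [if_pos hps]; exact mem_labelF.mp hps
    · rw [if_neg hps]; exact fun hl => hps (mem_labelF.mpr hl)

noncomputable def chi : (j : ℕ) → Ty α j → AFML1 α
  | 0, s => labelConj p0 s
  | (j+1), t => .and (labelConj p0 t.1)
      (if t.2 = ∅ then .boxBot
       else bigAnd p0 (t.2.toList.map (fun x => .dia (chi j x))))

lemma sat_chi : ∀ (j : ℕ) (t : Ty α j) (G : LabeledGraph α) (v : G.V),
    AFML1.sat G (chi p0 j t) v ↔ tyLe j t (ty j G v)
  | 0, s, G, v => by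
    refine (sat_labelConj p0 s G v).trans ?_
    exact ⟨Eq.symm, Eq.symm⟩
  | (j+1), t, G, v => by
    have hchi : chi p0 (j+1) t = .and (labelConj p0 t.1)
        (if t.2 = ∅ then .boxBot
         else bigAnd p0 (t.2.toList.map (fun x => .dia (chi p0 j x)))) := rfl
    rw [hchi]
    show AFML1.sat G (labelConj p0 t.1) v ∧ AFML1.sat G
      (if t.2 = ∅ then .boxBot
       else bigAnd p0 (t.2.toList.map (fun x => .dia (chi p0 j x)))) v ↔ _
    rw [sat_labelConj]
    have hty1 : (ty (j+1) G v).1 = labelF G v := rfl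
    have hty2 : (ty (j+1) G v).2 = (G.nbhdFinset v).image (fun u => ty j G u) := rfl
    show _ ∧ _ ↔ t.1 = (ty (j+1) G v).1 ∧ ((t.2 = ∅ → (ty (j+1) G v).2 = ∅) ∧
      ∀ x ∈ t.2, ∃ y ∈ (ty (j+1) G v).2, tyLe j x y)
    rw [hty1, hty2]
    apply and_congr ⟨Eq.symm, Eq.symm⟩
    by_cases ht2 : t.2 = ∅
    · rw [if_pos ht2, ht2]
      show (∀ u, ¬ G.adj v u) ↔ _
      constructor
      · intro hh
        refine ⟨fun _ => ?_, by simp⟩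
        apply Finset.image_eq_empty.mpr; rw [Finset.eq_empty_iff_forall_notMem]
        exact fun u hu => hh u (mem_nbhdFinset.mp hu)
      · rintro ⟨he, -⟩ u hadj
        have := he rfl
        replace this := Finset.eq_empty_iff_forall_notMem.mp (Finset.image_eq_empty.mp this)
        exact this u (mem_nbhdFinset.mpr hadj)
    · rw [if_neg ht2, sat_bigAnd]
      constructor
      · intro hh
        refine ⟨fun he => absurd he ht2, fun x hx => ?_⟩
        have := hh _ (List.mem_map.mpr ⟨x, Finset.mem_toList.mpr hx, rfl⟩)
        obtain ⟨u, hadj, hs⟩ := this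
        exact ⟨ty j G u, Finset.mem_image_of_mem _ (mem_nbhdFinset.mpr hadj),
          (sat_chi j x G u).mp hs⟩
      · rintro ⟨-, hh⟩ φ hφ
        obtain ⟨x, hx, rfl⟩ := List.mem_map.mp hφ
        obtain ⟨y, hy, hxy⟩ := hh x (Finset.mem_toList.mp hx)
        obtain ⟨u, hu, rfl⟩ := Finset.mem_image.mp hy
        exact ⟨u, mem_nbhdFinset.mp hu, (sat_chi j x G u).mpr hxy⟩

end Formulas

def dual {α : Type} : AFML1 α → AFML2 α
  | .atom p => .natom p
  | .natom p => .atom p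
  | .boxBot => .diaTop
  | .and φ ψ => .or (dual φ) (dual ψ)
  | .or φ ψ => .and (dual φ) (dual ψ)
  | .dia φ => .box (dual φ)

lemma sat_dual {α : Type} (G : LabeledGraph α) (φ : AFML1 α) :
    ∀ (v : G.V), AFML2.sat G (dual φ) v ↔ ¬ AFML1.sat G φ v := by
  induction φ with
  | atom p => intro v; simp [dual, AFML1.sat, AFML2.sat]
  | natom p => intro v; simp [dual, AFML1.sat, AFML2.sat]
  | boxBot => intro v; simp [dual, AFML1.sat, AFML2.sat]
  | and φ ψ ihφ ihψ =>
    intro v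
    show AFML2.sat G (dual φ) v ∨ AFML2.sat G (dual ψ) v ↔
      ¬ (AFML1.sat G φ v ∧ AFML1.sat G ψ v)
    rw [ihφ v, ihψ v]; tauto
  | or φ ψ ihφ ihψ =>
    intro v
    show AFML2.sat G (dual φ) v ∧ AFML2.sat G (dual ψ) v ↔
      ¬ (AFML1.sat G φ v ∨ AFML1.sat G ψ v)
    rw [ihφ v, ihψ v]; tauto
  | dia φ ihφ =>
    intro v
    show (∀ u, G.adj v u → AFML2.sat G (dual φ) u) ↔ ¬ ∃ u, G.adj v u ∧ AFML1.sat G φ u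
    push_neg
    exact forall_congr' fun u => imp_congr Iff.rfl (ihφ u)

end S16

namespace S16
variable {α : Type} [Fintype α]

/-- `pickP m b a'` : there is a successor of `b` whose depth-`m` type dominates that of `a'`. -/
def pickP (G1 G2 : LabeledGraph α) (m : ℕ) (b : G2.V) (a' : G1.V) : Prop :=
  ∃ c, G2.adj b c ∧ tyLe m (ty m G1 a') (ty m G2 c)

noncomputable def pickC (G1 G2 : LabeledGraph α) (m : ℕ) (b : G2.V) (a' : G1.V) : G2.V :=
  if h : pickP G1 G2 m b a' then h.choose else b

lemma pickC_spec {G1 G2 : LabeledGraph α} {m : ℕ} {b : G2.V} {a' : G1.V}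
    (h : pickP G1 G2 m b a') :
    G2.adj b (pickC G1 G2 m b a') ∧
      tyLe m (ty m G1 a') (ty m G2 (pickC G1 G2 m b a')) := by
  rw [pickC, dif_pos h]; exact h.choose_spec

/-- The blend graph. -/
@[reducible]
noncomputable def HG (G1 G2 : LabeledGraph α) (k n : ℕ) : LabeledGraph α where
  V := (G1.V × G2.V × Fin (k+1) × Fin n) ⊕ G2.V
  adj := fun x y => match x, y with
    | .inl (a, b, j, _), .inl (a', b', j', _) =>
        (j : ℕ) = (j' : ℕ) + 1 ∧ G1.adj a a' ∧ pickP G1 G2 (j' : ℕ) b a' ∧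
          b' = pickC G1 G2 (j' : ℕ) b a'
    | .inl (_, b, _, _), .inr b'' => G2.adj b b''
    | .inr b, .inr b' => G2.adj b b'
    | .inr _, .inl _ => False
  label := fun x => match x with
    | .inl (a, _, _, _) => G1.label a
    | .inr b => G2.label b

variable {G1 G2 : LabeledGraph α} {k n : ℕ}

lemma HG_adj_inl_inl {a a' : G1.V} {b b' : G2.V} {j j' : Fin (k+1)} {i i' : Fin n} :
    (HG G1 G2 k n).adj (.inl (a, b, j, i)) (.inl (a', b', j', i')) ↔
      ((j : ℕ) = (j' : ℕ) + 1 ∧ G1.adj a a' ∧ pickP G1 G2 (j' : ℕ) b a' ∧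
        b' = pickC G1 G2 (j' : ℕ) b a') := Iff.rfl

lemma HG_adj_inl_inr {a : G1.V} {b b'' : G2.V} {j : Fin (k+1)} {i : Fin n} :
    (HG G1 G2 k n).adj (.inl (a, b, j, i)) (.inr b'') ↔ G2.adj b b'' := Iff.rfl

lemma HG_adj_inr_inr {b b' : G2.V} :
    (HG G1 G2 k n).adj (.inr b) (.inr b') ↔ G2.adj b b' := Iff.rfl

lemma HG_adj_inr_inl {b : G2.V} {q} :
    ¬ (HG G1 G2 k n).adj (.inr b) (.inl q) := by
  obtain ⟨a', b', j', i'⟩ := q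
  exact id

lemma HG_label_inl {a : G1.V} {b : G2.V} {j : Fin (k+1)} {i : Fin n} :
    (HG G1 G2 k n).label (.inl (a, b, j, i)) = G1.label a := rfl

lemma HG_label_inr {b : G2.V} :
    (HG G1 G2 k n).label (.inr b) = G2.label b := rfl

lemma labelF_HG_inl {a : G1.V} {b : G2.V} {j : Fin (k+1)} {i : Fin n} :
    labelF (HG G1 G2 k n) (.inl (a, b, j, i)) = labelF G1 a := rfl

lemma labelF_HG_inr {b : G2.V} :
    labelF (HG G1 G2 k n) (.inr b) = labelF G2 b := rfl

lemma HG_nbhd_inr (b : G2.V) :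
    (HG G1 G2 k n).nbhdFinset (.inr b) =
      (G2.nbhdFinset b).map ⟨Sum.inr, Sum.inr_injective⟩ := by
  ext u
  rw [mem_nbhdFinset, Finset.mem_map]
  cases u with
  | inl q =>
    constructor
    · intro hh; exact absurd hh (HG_adj_inr_inl)
    · rintro ⟨c, -, hc⟩; exact Sum.inr_ne_inl hc
  | inr b' =>
    rw [HG_adj_inr_inr]
    constructor
    · intro hadj; exact ⟨b', mem_nbhdFinset.mpr hadj, rfl⟩
    · rintro ⟨c, hc, hcc⟩; cases hcc; exact mem_nbhdFinset.mp hc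

lemma ty_HG_inr : ∀ (j : ℕ) (b : G2.V), ty j (HG G1 G2 k n) (.inr b) = ty j G2 b
  | 0, b => labelF_HG_inr
  | (j+1), b => by
    show (_, _) = (_, _)
    refine Prod.ext labelF_HG_inr ?_
    show ((HG G1 G2 k n).nbhdFinset (.inr b)).image (fun u => ty j (HG G1 G2 k n) u)
      = (G2.nbhdFinset b).image (fun u => ty j G2 u)
    rw [HG_nbhd_inr]
    ext y
    simp only [Finset.mem_image, Finset.mem_map, Function.Embedding.coeFn_mk]
    constructor
    · rintro ⟨u, ⟨b', hb', rfl⟩, rfl⟩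
      exact ⟨b', hb', (ty_HG_inr j b').symm⟩
    · rintro ⟨b', hb', rfl⟩
      exact ⟨.inr b', ⟨b', hb', rfl⟩, ty_HG_inr j b'⟩

lemma ty_HG_inl : ∀ (j : ℕ) (jf : Fin (k+1)), (jf : ℕ) = j → ∀ (a : G1.V) (b : G2.V) (i : Fin n),
    tyLe j (ty j G1 a) (ty j G2 b) →
    ty j (HG G1 G2 k n) (.inl (a, b, jf, i)) = ty j G2 b
  | 0, jf, hjf, a, b, i, hle => by
    show labelF (HG G1 G2 k n) (.inl (a, b, jf, i)) = labelF G2 b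
    rw [labelF_HG_inl]
    exact hle
  | (j+1), jf, hjf, a, b, i, hle => by
    show (_, _) = (_, _)
    refine Prod.ext ?_ ?_
    · show labelF (HG G1 G2 k n) (.inl (a, b, jf, i)) = labelF G2 b
      rw [labelF_HG_inl]
      exact hle.1
    · show ((HG G1 G2 k n).nbhdFinset (.inl (a, b, jf, i))).image
        (fun u => ty j (HG G1 G2 k n) u) = (G2.nbhdFinset b).image (fun u => ty j G2 u)
      ext y
      simp only [Finset.mem_image]
      constructor
      · rintro ⟨u, hu, rfl⟩
        rw [mem_nbhdFinset] at hu
        cases u with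
        | inl q =>
          obtain ⟨a', b', j', i'⟩ := q
          rw [HG_adj_inl_inl] at hu
          obtain ⟨hj', hadj, hpick, rfl⟩ := hu
          have hjv : (j' : ℕ) = j := by omega
          rw [hjv] at hpick ⊢
          have hspec := pickC_spec hpick
          rw [ty_HG_inl j j' hjv a' _ i' hspec.2]
          exact ⟨_, mem_nbhdFinset.mpr hspec.1, rfl⟩
        | inr b'' =>
          rw [HG_adj_inl_inr] at hu
          rw [ty_HG_inr]
          exact ⟨b'', mem_nbhdFinset.mpr hu, rfl⟩
      · rintro ⟨b', hb', rfl⟩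
        refine ⟨.inr b', mem_nbhdFinset.mpr ?_, ty_HG_inr j b'⟩
        rw [HG_adj_inl_inr]
        exact mem_nbhdFinset.mp hb'

end S16

namespace S16
variable {α : Type} [Fintype α]
open Filter

variable {G1 G2 : LabeledGraph α} {k n : ℕ}

def embR (G1 G2 : LabeledGraph α) (k n : ℕ) : G2.V ↪ (HG G1 G2 k n).V :=
  ⟨Sum.inr, Sum.inr_injective⟩

@[simp] lemma embR_apply (b : G2.V) : embR G1 G2 k n b = (Sum.inr b : (HG G1 G2 k n).V) := rfl

noncomputable def embL (G1 G2 : LabeledGraph α) (k n : ℕ) (m : ℕ) (hmk : m < k + 1)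
    (b : G2.V) : (G1.V × Fin n) ↪ (HG G1 G2 k n).V where
  toFun := fun p => Sum.inl (p.1, pickC G1 G2 m b p.1, ⟨m, hmk⟩, p.2)
  inj' := by
    intro p q hpq
    simp only [Sum.inl.injEq, Prod.mk.injEq] at hpq
    exact Prod.ext hpq.1 hpq.2.2.2

@[simp] lemma embL_apply (m : ℕ) (hmk : m < k + 1) (b : G2.V) (p : G1.V × Fin n) :
    embL G1 G2 k n m hmk b p =
      (Sum.inl (p.1, pickC G1 G2 m b p.1, ⟨m, hmk⟩, p.2) : (HG G1 G2 k n).V) := rfl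

lemma feat_HG_inr (𝒢 : GNN α) : ∀ (ℓ : ℕ) (b : G2.V),
    𝒢.feat .mean (HG G1 G2 k n) ℓ (.inr b) = 𝒢.feat .mean G2 ℓ b
  | 0, b => rfl
  | (ℓ+1), b => by
    have hagg : (fun jdx => Agg.apply .mean ((HG G1 G2 k n).nbhdFinset (.inr b))
        (fun u => 𝒢.feat .mean (HG G1 G2 k n) ℓ u jdx)) =
        (fun jdx => Agg.apply .mean (G2.nbhdFinset b) (fun u => 𝒢.feat .mean G2 ℓ u jdx)) := by
      funext jdx
      show (∑ u ∈ _, _) / _ = (∑ u ∈ _, _) / _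
      rw [HG_nbhd_inr, Finset.sum_map, Finset.card_map]
      congr 1
      exact Finset.sum_congr rfl fun b'' _ => congrFun (feat_HG_inr 𝒢 ℓ b'') jdx
    funext i
    simp only [GNN.feat, feat_HG_inr 𝒢 ℓ b, hagg]

lemma HG_nbhd_copy (a : G1.V) (b : G2.V) (jf : Fin (k+1)) (i i' : Fin n) :
    (HG G1 G2 k n).nbhdFinset (.inl (a, b, jf, i)) =
      (HG G1 G2 k n).nbhdFinset (.inl (a, b, jf, i')) := by
  ext u
  rw [mem_nbhdFinset, mem_nbhdFinset]
  cases u with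
  | inl q => obtain ⟨a', b', j', i''⟩ := q; exact Iff.rfl
  | inr b'' => exact Iff.rfl

lemma feat_HG_copy (𝒢 : GNN α) : ∀ (ℓ : ℕ) (a : G1.V) (b : G2.V) (jf : Fin (k+1))
    (i i' : Fin n),
    𝒢.feat .mean (HG G1 G2 k n) ℓ (.inl (a, b, jf, i)) =
      𝒢.feat .mean (HG G1 G2 k n) ℓ (.inl (a, b, jf, i'))
  | 0, a, b, jf, i, i' => rfl
  | (ℓ+1), a, b, jf, i, i' => by
    funext idx
    simp only [GNN.feat]
    rw [feat_HG_copy 𝒢 ℓ a b jf i i', HG_nbhd_copy a b jf i i']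

lemma feat_HG_tendsto (𝒢 : GNN α) (hcont : 𝒢.HasContinuousCom)
    (G1 G2 : LabeledGraph α) (k : ℕ) (ℓ : ℕ) :
    ℓ ≤ 𝒢.L → ∀ (j : ℕ) (hj : j < k + 1), ℓ ≤ j → ∀ (a : G1.V) (b : G2.V),
      tyLe j (ty j G1 a) (ty j G2 b) → ∀ (idx : Fin (𝒢.δ ℓ)),
      Filter.Tendsto
        (fun nn : ℕ => 𝒢.feat .mean (HG G1 G2 k (nn+1)) ℓ
          (.inl (a, b, ⟨j, hj⟩, 0)) idx)
        Filter.atTop (nhds (𝒢.feat .mean G1 ℓ a idx)) := by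
  induction ℓ with
  | zero =>
    intro _ j hj _ a b _ idx
    have hconst : ∀ nn : ℕ, 𝒢.feat .mean (HG G1 G2 k (nn+1)) 0
        (.inl (a, b, ⟨j, hj⟩, 0)) idx = 𝒢.feat .mean G1 0 a idx :=
      fun nn => rfl
    simp only [hconst]
    exact tendsto_const_nhds
  | succ ℓ ih =>
    intro hL j hj hlj a b hle idx
    obtain ⟨m, rfl⟩ : ∃ m, j = m + 1 := ⟨j - 1, by omega⟩
    have hmk : m < k + 1 := by omega
    obtain ⟨hfst, hemp, hsim⟩ := hle
    have hpickall : ∀ a' ∈ G1.nbhdFinset a, pickP G1 G2 m b a' := by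
      intro a' ha'
      obtain ⟨y, hy, hxy⟩ := hsim (ty m G1 a')
        (Finset.mem_image_of_mem (fun u => ty m G1 u) ha')
      obtain ⟨c, hc, rfl⟩ := Finset.mem_image.mp hy
      exact ⟨c, mem_nbhdFinset.mp hc, hxy⟩
    -- own-feature convergence
    have hown : Filter.Tendsto
        (fun nn : ℕ => 𝒢.feat .mean (HG G1 G2 k (nn+1)) ℓ
          (.inl (a, b, ⟨m+1, hj⟩, 0)))
        Filter.atTop (nhds (𝒢.feat .mean G1 ℓ a)) :=
      tendsto_pi_nhds.mpr fun idy =>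
        ih (by omega) (m+1) hj (by omega) a b ⟨hfst, hemp, hsim⟩ idy
    -- aggregate convergence
    have hagg : Filter.Tendsto
        (fun nn : ℕ => (fun jdx => Agg.apply .mean
          ((HG G1 G2 k (nn+1)).nbhdFinset (.inl (a, b, ⟨m+1, hj⟩, 0)))
          (fun u => 𝒢.feat .mean (HG G1 G2 k (nn+1)) ℓ u jdx)))
        Filter.atTop
        (nhds (fun jdx => Agg.apply .mean (G1.nbhdFinset a)
          (fun u => 𝒢.feat .mean G1 ℓ u jdx))) := by
      refine tendsto_pi_nhds.mpr fun jdx => ?_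
      by_cases hA : G1.nbhdFinset a = ∅
      · -- dead end: everything is 0
        have hB : G2.nbhdFinset b = ∅ := by
          have h2 : (G2.nbhdFinset b).image (fun u => ty m G2 u) = ∅ :=
            hemp (by rw [show (ty (m+1) G1 a).2 =
              (G1.nbhdFinset a).image (fun u => ty m G1 u) from rfl, hA,
              Finset.image_empty]; rfl)
          exact Finset.image_eq_empty.mp h2
        have hnb : ∀ (nn : ℕ), (HG G1 G2 k (nn+1)).nbhdFinset
            (.inl (a, b, ⟨m+1, hj⟩, 0)) = ∅ := by
          intro nn
          rw [Finset.eq_empty_iff_forall_notMem]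
          intro u hu
          rw [mem_nbhdFinset] at hu
          cases u with
          | inl q =>
            obtain ⟨a', b', j', i'⟩ := q
            obtain ⟨-, hadj, -⟩ := hu
            exact Finset.eq_empty_iff_forall_notMem.mp hA a' (mem_nbhdFinset.mpr hadj)
          | inr b'' =>
            exact Finset.eq_empty_iff_forall_notMem.mp hB b'' (mem_nbhdFinset.mpr hu)
        have hz : ∀ nn : ℕ, Agg.apply .mean
            ((HG G1 G2 k (nn+1)).nbhdFinset (.inl (a, b, ⟨m+1, hj⟩, 0)))
            (fun u => 𝒢.feat .mean (HG G1 G2 k (nn+1)) ℓ u jdx) = 0 := by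
          intro nn
          show (∑ u ∈ _, _) / _ = 0
          rw [hnb nn]
          simp
        have hz' : Agg.apply .mean (G1.nbhdFinset a)
            (fun u => 𝒢.feat .mean G1 ℓ u jdx) = 0 := by
          show (∑ u ∈ _, _) / _ = 0
          rw [hA]
          simp
        simp only [hz, hz']
        exact tendsto_const_nhds
      · replace hA : (G1.nbhdFinset a).Nonempty := Finset.nonempty_iff_ne_empty.mpr hA
        -- the neighborhood of the blend vertex
        have hdisj : ∀ nn : ℕ, Disjoint
            (((G1.nbhdFinset a) ×ˢ (Finset.univ : Finset (Fin (nn+1)))).map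
              (embL G1 G2 k (nn+1) m hmk b))
            ((G2.nbhdFinset b).map (embR G1 G2 k (nn+1))) := by
          intro nn
          rw [Finset.disjoint_left]
          rintro x hx hx'
          obtain ⟨p, -, rfl⟩ := Finset.mem_map.mp hx
          obtain ⟨c, -, hc⟩ := Finset.mem_map.mp hx'
          rw [embR_apply, embL_apply] at hc
          exact Sum.inr_ne_inl hc
        have hnb : ∀ nn : ℕ, (HG G1 G2 k (nn+1)).nbhdFinset
            (.inl (a, b, ⟨m+1, hj⟩, 0)) =
            Finset.disjUnion _ _ (hdisj nn) := by
          intro nn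
          ext u
          rw [mem_nbhdFinset, Finset.mem_disjUnion, Finset.mem_map, Finset.mem_map]
          cases u with
          | inl q =>
            obtain ⟨a', b', j', i'⟩ := q
            rw [HG_adj_inl_inl]
            constructor
            · rintro ⟨hj', hadj, hpick, rfl⟩
              have hjv : (j' : ℕ) = m := by
                have : m + 1 = (j' : ℕ) + 1 := hj'
                omega
              have hj'eq : j' = ⟨m, hmk⟩ := Fin.ext hjv
              subst hj'eq
              left
              refine ⟨(a', i'), Finset.mem_product.mpr
                ⟨mem_nbhdFinset.mpr hadj, Finset.mem_univ _⟩, ?_⟩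
              rw [embL_apply]
            · rintro (⟨p, hp, heq⟩ | ⟨c, -, heq⟩)
              · rw [embL_apply] at heq
                simp only [Sum.inl.injEq, Prod.mk.injEq] at heq
                obtain ⟨rfl, hb', hj', rfl⟩ := heq
                have hp1 : p.1 ∈ G1.nbhdFinset a := (Finset.mem_product.mp hp).1
                refine ⟨?_, mem_nbhdFinset.mp hp1, ?_, ?_⟩
                · rw [← hj']
                · rw [show ((j' : ℕ)) = m from by rw [← hj']]
                  exact hpickall p.1 hp1
                · rw [show ((j' : ℕ)) = m from by rw [← hj']]
                  exact hb'.symm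
              · rw [embR_apply] at heq
                exact (Sum.inr_ne_inl heq).elim
          | inr b'' =>
            rw [HG_adj_inl_inr]
            constructor
            · intro hadj
              right
              exact ⟨b'', mem_nbhdFinset.mpr hadj, rfl⟩
            · rintro (⟨p, -, heq⟩ | ⟨c, hc, heq⟩)
              · rw [embL_apply] at heq
                exact (Sum.inl_ne_inr heq).elim
              · rw [embR_apply] at heq
                simp only [Sum.inr.injEq] at heq
                subst heq
                exact mem_nbhdFinset.mp hc
        -- sums and cardinalities
        have hsum : ∀ (nn : ℕ),
            (∑ u ∈ (HG G1 G2 k (nn+1)).nbhdFinset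
              (.inl (a, b, ⟨m+1, hj⟩, 0)),
              𝒢.feat .mean (HG G1 G2 k (nn+1)) ℓ u jdx) =
            ((nn:ℝ)+1) * (∑ a' ∈ G1.nbhdFinset a,
              𝒢.feat .mean (HG G1 G2 k (nn+1)) ℓ
                (.inl (a', pickC G1 G2 m b a', ⟨m, hmk⟩, 0)) jdx) +
            (∑ b'' ∈ G2.nbhdFinset b, 𝒢.feat .mean G2 ℓ b'' jdx) := by
          intro nn
          rw [hnb nn, Finset.sum_disjUnion, Finset.sum_map, Finset.sum_map,
            Finset.sum_product]
          congr 1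
          · rw [Finset.mul_sum]
            refine Finset.sum_congr rfl fun a' ha' => ?_
            show (∑ x ∈ (Finset.univ : Finset (Fin (nn+1))),
              𝒢.feat Agg.mean (HG G1 G2 k (nn+1)) ℓ
                (Sum.inl (a', pickC G1 G2 m b a', ⟨m, hmk⟩, x)) jdx) = _
            have hcopy : ∀ i' : Fin (nn+1),
                𝒢.feat .mean (HG G1 G2 k (nn+1)) ℓ
                  (.inl (a', pickC G1 G2 m b a', ⟨m, hmk⟩, i')) jdx =
                𝒢.feat .mean (HG G1 G2 k (nn+1)) ℓ
                  (.inl (a', pickC G1 G2 m b a', ⟨m, hmk⟩, 0)) jdx :=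
              fun i' => by rw [feat_HG_copy 𝒢 ℓ a' _ _ i' 0]
            rw [Finset.sum_congr rfl fun i' _ => hcopy i', Finset.sum_const,
              Finset.card_univ, Fintype.card_fin, nsmul_eq_mul]
            push_cast
            ring
          · exact Finset.sum_congr rfl fun b'' _ => congrFun (feat_HG_inr 𝒢 ℓ b'') jdx
        have hcard : ∀ nn : ℕ, ((HG G1 G2 k (nn+1)).nbhdFinset
            (.inl (a, b, ⟨m+1, hj⟩, 0))).card =
            (G1.nbhdFinset a).card * (nn+1) + (G2.nbhdFinset b).card := by
          intro nn
          rw [hnb nn, Finset.card_disjUnion, Finset.card_map, Finset.card_map,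
            Finset.card_product, Finset.card_univ, Fintype.card_fin]
        -- the limit computation
        have hApos : 0 < (G1.nbhdFinset a).card := Finset.card_pos.mpr hA
        set A : ℝ := ((G1.nbhdFinset a).card : ℝ) with hAdef
        set B : ℝ := ((G2.nbhdFinset b).card : ℝ) with hBdef
        set C : ℝ := (∑ b'' ∈ G2.nbhdFinset b, 𝒢.feat .mean G2 ℓ b'' jdx) with hCdef
        set S : ℕ → ℝ := fun nn => (∑ a' ∈ G1.nbhdFinset a,
          𝒢.feat .mean (HG G1 G2 k (nn+1)) ℓ
            (.inl (a', pickC G1 G2 m b a', ⟨m, hmk⟩, 0)) jdx)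
          with hSdef
        set Sinf : ℝ := (∑ a' ∈ G1.nbhdFinset a, 𝒢.feat .mean G1 ℓ a' jdx) with hSinfdef
        have hAposR : (0:ℝ) < A := by rw [hAdef]; exact_mod_cast hApos
        have hA0 : A ≠ 0 := ne_of_gt hAposR
        have hBnneg : (0:ℝ) ≤ B := by rw [hBdef]; positivity
        have hS : Filter.Tendsto S Filter.atTop (nhds Sinf) := by
          rw [hSdef, hSinfdef]
          refine tendsto_finset_sum _ fun a' ha' => ?_
          exact ih (by omega) m hmk (by omega) a' (pickC G1 G2 m b a')
            (pickC_spec (hpickall a' ha')).2 jdx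
        have h1n : Filter.Tendsto (fun nn : ℕ => 1 / ((nn:ℝ)+1)) Filter.atTop (nhds 0) :=
          tendsto_one_div_add_atTop_nhds_zero_nat
        have hnum : Filter.Tendsto (fun nn : ℕ => S nn + C * (1/((nn:ℝ)+1)))
            Filter.atTop (nhds (Sinf + C * 0)) := hS.add (h1n.const_mul C)
        have hden : Filter.Tendsto (fun nn : ℕ => A + B * (1/((nn:ℝ)+1)))
            Filter.atTop (nhds (A + B * 0)) := tendsto_const_nhds.add (h1n.const_mul B)
        have hdiv := hnum.div hden (by rw [mul_zero, add_zero]; exact hA0)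
        rw [mul_zero, add_zero, mul_zero, add_zero] at hdiv
        have htgt : Agg.apply Agg.mean (G1.nbhdFinset a)
            (fun u => 𝒢.feat Agg.mean G1 ℓ u jdx) = Sinf / A := by
          show (∑ u ∈ _, _) / _ = Sinf / A
          rw [hSinfdef, hAdef]
        rw [htgt]
        refine Filter.Tendsto.congr (fun nn => ?_) hdiv
        show (S nn + C * (1/((nn:ℝ)+1))) / (A + B * (1/((nn:ℝ)+1))) =
          Agg.apply Agg.mean _ _
        show _ = (∑ u ∈ _, _) / _
        rw [hsum nn, hcard nn]
        have hn1 : (0:ℝ) < (nn:ℝ) + 1 := by positivity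
        have hden1 : (0:ℝ) < A + B * (1/((nn:ℝ)+1)) := by positivity
        have hden2 : (0:ℝ) <
            (((G1.nbhdFinset a).card * (nn+1) + (G2.nbhdFinset b).card : ℕ) : ℝ) := by
          have h0 : 0 < (G1.nbhdFinset a).card * (nn+1) := by positivity
          exact_mod_cast Nat.lt_of_lt_of_le h0 (Nat.le_add_right _ _)
        rw [div_eq_div_iff hden1.ne' hden2.ne']
        push_cast
        rw [hAdef, hBdef]
        field_simp
        ring_nf
        simp only [hSdef]; ring
    -- combine via continuity of com
    have hcomb := ((hcont ℓ (by omega)).tendsto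
      ((𝒢.feat .mean G1 ℓ a), (fun jdx => Agg.apply .mean (G1.nbhdFinset a)
        (fun u => 𝒢.feat .mean G1 ℓ u jdx)))).comp (hown.prodMk_nhds hagg)
    have hfinal := ((continuous_apply idx).tendsto _).comp hcomb
    simp only [GNN.feat]
    exact hfinal
end S16

/-- If a vertex property is defined by some Mean-GNN with continuous
combination functions and also by some ML formula, then it is defined by an AFML
formula. -/
theorem stmt16 {α : Type} [Fintype α] (𝒢 : GNN α) (hcont : 𝒢.HasContinuousCom)
    (ψ : ML α)
    (h : ∀ (G : LabeledGraph α) (v : G.V), 𝒢.accepts Agg.mean G v ↔ ML.sat G ψ v) :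
    ∃ φ : AFML α, ∀ (G : LabeledGraph α) (v : G.V),
      𝒢.accepts Agg.mean G v ↔ AFML.sat G φ v := by
  classical
  open S16 in
  set k := max (mlDepth ψ) 𝒢.L with hk
  have hψk : mlDepth ψ ≤ k := le_max_left _ _
  have hLk : 𝒢.L ≤ k := le_max_right _ _
  have hkk : k < k + 1 := Nat.lt_succ_self k
  set p0 := mlAtom ψ with hp0
  -- ML-truth transfer to the blend graph
  have hML : ∀ (G1 : LabeledGraph α) (v1 : G1.V) (G2 : LabeledGraph α) (v2 : G2.V),
      tyLe k (ty k G1 v1) (ty k G2 v2) → ∀ n : ℕ,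
      (ML.sat (HG G1 G2 k (n+1)) ψ (.inl (v1, v2, ⟨k, hkk⟩, 0)) ↔ ML.sat G2 ψ v2) := by
    intro G1 v1 G2 v2 hle n
    exact ml_inv (HG G1 G2 k (n+1)) G2 ψ k hψk _ v2
      (ty_HG_inl k ⟨k, hkk⟩ rfl v1 v2 0 hle)
  -- feature convergence on the blend graph
  have hfeat : ∀ (G1 : LabeledGraph α) (v1 : G1.V) (G2 : LabeledGraph α) (v2 : G2.V),
      tyLe k (ty k G1 v1) (ty k G2 v2) →
      Filter.Tendsto (fun n : ℕ => 𝒢.feat Agg.mean (HG G1 G2 k (n+1)) 𝒢.L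
        (.inl (v1, v2, ⟨k, hkk⟩, 0)) 𝒢.clsIdx) Filter.atTop
        (nhds (𝒢.feat Agg.mean G1 𝒢.L v1 𝒢.clsIdx)) := by
    intro G1 v1 G2 v2 hle
    exact feat_HG_tendsto 𝒢 hcont G1 G2 k 𝒢.L le_rfl k hkk hLk v1 v2 hle 𝒢.clsIdx
  cases hB : 𝒢.clsStrict with
  | true =>
    -- accepted vertices are upward closed along tyLe
    have hup : ∀ (G1 : LabeledGraph α) (v1 : G1.V) (G2 : LabeledGraph α) (v2 : G2.V),
        tyLe k (ty k G1 v1) (ty k G2 v2) →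
        𝒢.accepts Agg.mean G1 v1 → 𝒢.accepts Agg.mean G2 v2 := by
      intro G1 v1 G2 v2 hle hacc
      by_contra hrej
      have hsat2 : ¬ ML.sat G2 ψ v2 := fun hs => hrej ((h G2 v2).mpr hs)
      have hbound : ∀ n : ℕ, 𝒢.feat Agg.mean (HG G1 G2 k (n+1)) 𝒢.L
          (.inl (v1, v2, ⟨k, hkk⟩, 0)) 𝒢.clsIdx ≤ 𝒢.clsThr := by
        intro n
        have hrejH : ¬ 𝒢.accepts Agg.mean (HG G1 G2 k (n+1)) (.inl (v1, v2, ⟨k, hkk⟩, 0)) :=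
          fun hax => hsat2 ((hML G1 v1 G2 v2 hle n).mp ((h _ _).mp hax))
        rw [GNN.accepts, hB] at hrejH
        simpa using not_lt.mp hrejH
      have hlim : 𝒢.feat Agg.mean G1 𝒢.L v1 𝒢.clsIdx ≤ 𝒢.clsThr :=
        le_of_tendsto (hfeat G1 v1 G2 v2 hle) (Filter.Eventually.of_forall hbound)
      rw [GNN.accepts, hB] at hacc
      simp only [if_true] at hacc
      exact absurd hlim (not_le.mpr hacc)
    refine ⟨Sum.inl (bigOr p0
      (((Finset.univ.filter (fun t : Ty α k => ∃ (G : LabeledGraph α) (v : G.V),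
          𝒢.accepts Agg.mean G v ∧ ty k G v = t)).toList).map (chi p0 k))), ?_⟩
    intro G v
    show _ ↔ AFML1.sat G _ v
    rw [sat_bigOr]
    constructor
    · intro hacc
      refine ⟨chi p0 k (ty k G v), List.mem_map.mpr ⟨ty k G v,
        Finset.mem_toList.mpr (Finset.mem_filter.mpr
          ⟨Finset.mem_univ _, G, v, hacc, rfl⟩), rfl⟩, ?_⟩
      rw [sat_chi]
      exact tyLe_refl k _
    · rintro ⟨φ', hmem, hsatφ⟩
      obtain ⟨t, ht, rfl⟩ := List.mem_map.mp hmem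
      obtain ⟨-, G1, v1, hacc1, rfl⟩ := Finset.mem_filter.mp (Finset.mem_toList.mp ht)
      rw [sat_chi] at hsatφ
      exact hup G1 v1 G v hsatφ hacc1
  | false =>
    -- accepted vertices are downward closed along tyLe
    have hdown : ∀ (G1 : LabeledGraph α) (v1 : G1.V) (G2 : LabeledGraph α) (v2 : G2.V),
        tyLe k (ty k G1 v1) (ty k G2 v2) →
        𝒢.accepts Agg.mean G2 v2 → 𝒢.accepts Agg.mean G1 v1 := by
      intro G1 v1 G2 v2 hle hacc2
      have hbound : ∀ n : ℕ, 𝒢.clsThr ≤ 𝒢.feat Agg.mean (HG G1 G2 k (n+1)) 𝒢.L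
          (.inl (v1, v2, ⟨k, hkk⟩, 0)) 𝒢.clsIdx := by
        intro n
        have haccH : 𝒢.accepts Agg.mean (HG G1 G2 k (n+1)) (.inl (v1, v2, ⟨k, hkk⟩, 0)) :=
          (h _ _).mpr ((hML G1 v1 G2 v2 hle n).mpr ((h G2 v2).mp hacc2))
        rw [GNN.accepts, hB] at haccH
        simpa using haccH
      have hlim : 𝒢.clsThr ≤ 𝒢.feat Agg.mean G1 𝒢.L v1 𝒢.clsIdx :=
        ge_of_tendsto (hfeat G1 v1 G2 v2 hle) (Filter.Eventually.of_forall hbound)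
      rw [GNN.accepts, hB]
      simpa using hlim
    have hφ1 : ∀ (G : LabeledGraph α) (v : G.V),
        AFML1.sat G (bigOr p0
          (((Finset.univ.filter (fun t : Ty α k => ∃ (G' : LabeledGraph α) (v' : G'.V),
            ¬ 𝒢.accepts Agg.mean G' v' ∧ ty k G' v' = t)).toList).map (chi p0 k))) v ↔
        ¬ 𝒢.accepts Agg.mean G v := by
      intro G v
      rw [sat_bigOr]
      constructor
      · rintro ⟨φ', hmem, hsatφ⟩ hacc
        obtain ⟨t, ht, rfl⟩ := List.mem_map.mp hmem
        obtain ⟨-, G1, v1, hrej1, rfl⟩ := Finset.mem_filter.mp (Finset.mem_toList.mp ht)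
        rw [sat_chi] at hsatφ
        exact hrej1 (hdown G1 v1 G v hsatφ hacc)
      · intro hrej
        refine ⟨chi p0 k (ty k G v), List.mem_map.mpr ⟨ty k G v,
          Finset.mem_toList.mpr (Finset.mem_filter.mpr
            ⟨Finset.mem_univ _, G, v, hrej, rfl⟩), rfl⟩, ?_⟩
        rw [sat_chi]
        exact tyLe_refl k _
    refine ⟨Sum.inr (dual (bigOr p0
      (((Finset.univ.filter (fun t : Ty α k => ∃ (G' : LabeledGraph α) (v' : G'.V),
        ¬ 𝒢.accepts Agg.mean G' v' ∧ ty k G' v' = t)).toList).map (chi p0 k)))), ?_⟩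
    intro G v
    show _ ↔ AFML2.sat G _ v
    rw [sat_dual, hφ1]
    exact not_not.symm
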